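/- Monotonicity of the ℓ1-regularized PageRank regularization path: for the family of objectives F_ρ(x) = f(x) + αρ‖D^{1/2}x‖₁ with unique minimizers x⋆(ρ) = argmin_x F_ρ(x) (ρ ≥ 0), if ρ' > ρ ≥ 0 then x⋆(ρ') ≤ x⋆(ρ) coordinatewise. -/

import Mathlib

open Finset

noncomputable section

/-- Degree of vertex `i` in the (unweighted) graph with adjacency matrix `A`. -/
def deg {n : ℕ} (A : Matrix (Fin n) (Fin n) ℝ) (i : Fin n) : ℝ := ∑ j, A i j

/-- The PageRank matrix `Q = αI + ((1−α)/2)·𝓛 = ((1+α)/2)·I − ((1−α)/2)·D^{-1/2} A D^{-1/2}`. -/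
def Qmat {n : ℕ} (A : Matrix (Fin n) (Fin n) ℝ) (α : ℝ) : Matrix (Fin n) (Fin n) ℝ :=
  fun i j => (if i = j then (1 + α) / 2 else 0)
    - ((1 - α) / 2) * A i j / (Real.sqrt (deg A i) * Real.sqrt (deg A j))

/-- Smooth PageRank objective `f(x) = (1/2)⟨x, Qx⟩ − α⟨D^{-1/2} e_v, x⟩` with seed vertex `v`. -/
def fPR {n : ℕ} (A : Matrix (Fin n) (Fin n) ℝ) (α : ℝ) (v : Fin n) (x : Fin n → ℝ) : ℝ :=
  (1 / 2) * (∑ i, x i * (Qmat A α).mulVec x i) - α * (x v / Real.sqrt (deg A v))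

/-- Gradient of `fPR`: `∇f(x) = Qx − α·D^{-1/2} e_v`. -/
def gradf {n : ℕ} (A : Matrix (Fin n) (Fin n) ℝ) (α : ℝ) (v : Fin n) (x : Fin n → ℝ) :
    Fin n → ℝ :=
  fun i => (Qmat A α).mulVec x i - α * (if i = v then 1 / Real.sqrt (deg A v) else 0)

/-- Weighted ℓ1 norm `‖D^{1/2} x‖₁ = ∑ i, √(d i)·|x i|`. -/
def l1w {n : ℕ} (A : Matrix (Fin n) (Fin n) ℝ) (x : Fin n → ℝ) : ℝ :=
  ∑ i, Real.sqrt (deg A i) * |x i|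

/-- ℓ1-regularized PageRank objective `F_ρ(x) = f(x) + αρ‖D^{1/2}x‖₁`. -/
def Freg {n : ℕ} (A : Matrix (Fin n) (Fin n) ℝ) (α : ℝ) (v : Fin n) (ρ : ℝ)
    (x : Fin n → ℝ) : ℝ :=
  fPR A α v x + α * ρ * l1w A x

/-- Coordinatewise soft-thresholding at levels `t·√(d i)`: this is the proximal map
`prox_{ηg}` of `g(x) = cαρ‖D^{1/2}x‖₁` with `t = η·c·α·ρ`. -/
def softT {n : ℕ} (A : Matrix (Fin n) (Fin n) ℝ) (t : ℝ) (w : Fin n → ℝ) : Fin n → ℝ :=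
  fun i => Real.sign (w i) * max (|w i| - t * Real.sqrt (deg A i)) 0

/-- Euclidean norm on `Fin n → ℝ`. -/
def enorm {n : ℕ} (x : Fin n → ℝ) : ℝ := Real.sqrt (∑ i, (x i) ^ 2)

open Classical in
/-- Degree-weighted volume of a vertex set: `vol(S) = ∑_{i ∈ S} d i`. -/
def volS {n : ℕ} (A : Matrix (Fin n) (Fin n) ℝ) (S : Set (Fin n)) : ℝ :=
  ∑ i ∈ Finset.univ.filter (fun i => i ∈ S), deg A i

/-- Neighbor set of a vertex. -/
def nbr {n : ℕ} (A : Matrix (Fin n) (Fin n) ℝ) (i : Fin n) : Set (Fin n) := {j | A i j ≠ 0}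

/-- Vertex boundary of `S`: vertices outside `S` with a neighbor in `S`. -/
def bdry {n : ℕ} (A : Matrix (Fin n) (Fin n) ℝ) (S : Set (Fin n)) : Set (Fin n) :=
  {j | j ∉ S ∧ ∃ i ∈ S, A j i ≠ 0}

/-- `A` is the adjacency matrix of a finite undirected unweighted loopless graph
with all degrees positive. -/
structure IsGraph {n : ℕ} (A : Matrix (Fin n) (Fin n) ℝ) : Prop where
  symm : ∀ i j, A i j = A j i
  zero_one : ∀ i j, A i j = 0 ∨ A i j = 1
  loopless : ∀ i, A i i = 0
  deg_pos : ∀ i, 0 < deg A i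

/-- Quadratic form as an explicit double sum. -/
def qsum {n : ℕ} (Q : Matrix (Fin n) (Fin n) ℝ) (x : Fin n → ℝ) : ℝ :=
  ∑ i, ∑ j, x i * Q i j * x j

def vmax {n : ℕ} (x y : Fin n → ℝ) : Fin n → ℝ := fun i => max (x i) (y i)
def vmin {n : ℕ} (x y : Fin n → ℝ) : Fin n → ℝ := fun i => min (x i) (y i)
def vmid {n : ℕ} (x y : Fin n → ℝ) : Fin n → ℝ := fun i => (x i + y i) / 2
def vsub {n : ℕ} (x y : Fin n → ℝ) : Fin n → ℝ := fun i => x i - y i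

lemma qsum_mulVec {n : ℕ} (Q : Matrix (Fin n) (Fin n) ℝ) (x : Fin n → ℝ) :
    ∑ i, x i * Q.mulVec x i = qsum Q x := by
  unfold qsum
  refine Finset.sum_congr rfl fun i _ => ?_
  simp only [Matrix.mulVec, dotProduct, Finset.mul_sum]
  exact Finset.sum_congr rfl fun j _ => by ring

lemma fPR_eq {n : ℕ} (A : Matrix (Fin n) (Fin n) ℝ) (α : ℝ) (v : Fin n) (x : Fin n → ℝ) :
    fPR A α v x = (1 / 2) * qsum (Qmat A α) x - α * (x v / Real.sqrt (deg A v)) := by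
  unfold fPR; rw [qsum_mulVec]

lemma A_nn {n : ℕ} {A : Matrix (Fin n) (Fin n) ℝ} (hG : IsGraph A) (i j : Fin n) :
    0 ≤ A i j := by rcases hG.zero_one i j with h | h <;> simp [h]

lemma qsum_mid {n : ℕ} (Q : Matrix (Fin n) (Fin n) ℝ) (x y : Fin n → ℝ) :
    qsum Q (vmid x y)
      = qsum Q x / 2 + qsum Q y / 2 - qsum Q (vsub x y) / 4 := by
  unfold qsum vmid vsub
  simp only [Finset.sum_div, ← Finset.sum_add_distrib, ← Finset.sum_sub_distrib]
  refine Finset.sum_congr rfl fun i _ => ?_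
  refine Finset.sum_congr rfl fun j _ => ?_
  ring
lemma quad_lb {n : ℕ} {A : Matrix (Fin n) (Fin n) ℝ} (hG : IsGraph A)
    {α : ℝ} (hα : 0 < α) (hα1 : α ≤ 1) (x : Fin n → ℝ) :
    α * ∑ i, x i ^ 2 ≤ qsum (Qmat A α) x := by
  have hd : ∀ i, (0:ℝ) < deg A i := hG.deg_pos
  have hs : ∀ i, 0 < Real.sqrt (deg A i) := fun i => Real.sqrt_pos.mpr (hd i)
  set u : Fin n → ℝ := fun i => x i / Real.sqrt (deg A i) with hu
  have hx2 : ∀ i, x i ^ 2 = deg A i * u i ^ 2 := by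
    intro i
    show x i ^ 2 = deg A i * (x i / Real.sqrt (deg A i)) ^ 2
    rw [div_pow, Real.sq_sqrt (hd i).le, mul_div_cancel₀ _ (hd i).ne']
  have hQsplit : qsum (Qmat A α) x
      = (1 + α) / 2 * ∑ i, x i ^ 2 - (1 - α) / 2 * ∑ i, ∑ j, A i j * (u i * u j) := by
    unfold qsum Qmat
    rw [Finset.mul_sum, Finset.mul_sum, ← Finset.sum_sub_distrib]
    refine Finset.sum_congr rfl fun i _ => ?_
    have e1 : ∀ j : Fin n,
        x i * ((if i = j then (1 + α) / 2 else 0)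
          - (1 - α) / 2 * A i j / (Real.sqrt (deg A i) * Real.sqrt (deg A j))) * x j
        = (if i = j then (1 + α) / 2 * x i ^ 2 else 0)
          - (1 - α) / 2 * (A i j * (u i * u j)) := by
      intro j
      have e2 : x i * ((1 - α) / 2 * A i j / (Real.sqrt (deg A i) * Real.sqrt (deg A j))) * x j
          = (1 - α) / 2 * (A i j * (u i * u j)) := by
        show _ = (1 - α) / 2 * (A i j * (x i / Real.sqrt (deg A i) * (x j / Real.sqrt (deg A j))))
        field_simp
      rcases eq_or_ne i j with h | h
      · subst h
        rw [if_pos rfl, if_pos rfl, ← e2]; ring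
      · rw [if_neg h, if_neg h, ← e2]; ring
    simp only [e1]
    rw [Finset.sum_sub_distrib, Finset.sum_ite_eq, if_pos (Finset.mem_univ i), ← Finset.mul_sum]
  have hAnn : ∀ i j, 0 ≤ A i j := A_nn hG
  have hS : ∑ i, ∑ j, A i j * (u i * u j) ≤ ∑ i, x i ^ 2 := by
    have h1 : ∑ i, ∑ j, A i j * (u i * u j) ≤ ∑ i, ∑ j, A i j * ((u i ^ 2 + u j ^ 2) / 2) :=
      Finset.sum_le_sum fun i _ => Finset.sum_le_sum fun j _ =>
        mul_le_mul_of_nonneg_left (by nlinarith [sq_nonneg (u i - u j)]) (hAnn i j)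
    have h2 : ∑ i, ∑ j, A i j * ((u i ^ 2 + u j ^ 2) / 2) = ∑ i, x i ^ 2 := by
      have e : ∀ i j : Fin n, A i j * ((u i ^ 2 + u j ^ 2) / 2)
          = A i j * u i ^ 2 / 2 + A i j * u j ^ 2 / 2 := fun i j => by ring
      simp only [e, Finset.sum_add_distrib]
      have p1 : ∑ i, ∑ j, A i j * u i ^ 2 / 2 = ∑ i, deg A i * u i ^ 2 / 2 := by
        refine Finset.sum_congr rfl fun i _ => ?_
        rw [← Finset.sum_div, ← Finset.sum_mul]
        rfl
      have p2 : ∑ i, ∑ j, A i j * u j ^ 2 / 2 = ∑ i, deg A i * u i ^ 2 / 2 := by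
        rw [Finset.sum_comm]
        refine Finset.sum_congr rfl fun j _ => ?_
        rw [← Finset.sum_div, ← Finset.sum_mul]
        have : ∑ i, A i j = deg A j := by
          unfold deg
          exact Finset.sum_congr rfl fun i _ => hG.symm i j
        rw [this]
      rw [p1, p2, ← Finset.sum_add_distrib]
      refine Finset.sum_congr rfl fun i _ => ?_
      rw [hx2 i]; ring
    linarith
  rw [hQsplit]
  nlinarith [mul_nonneg (by linarith : (0:ℝ) ≤ (1 - α) / 2)
    (by linarith : (0:ℝ) ≤ ∑ i, x i ^ 2 - ∑ i, ∑ j, A i j * (u i * u j))]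

lemma qsum_submod {n : ℕ} {A : Matrix (Fin n) (Fin n) ℝ} (hG : IsGraph A)
    {α : ℝ} (hα1 : α ≤ 1) (x y : Fin n → ℝ) :
    qsum (Qmat A α) (vmax x y) + qsum (Qmat A α) (vmin x y)
      ≤ qsum (Qmat A α) x + qsum (Qmat A α) y := by
  unfold qsum vmax vmin
  rw [← Finset.sum_add_distrib, ← Finset.sum_add_distrib]
  refine Finset.sum_le_sum fun i _ => ?_
  rw [← Finset.sum_add_distrib, ← Finset.sum_add_distrib]
  refine Finset.sum_le_sum fun j _ => ?_
  rcases eq_or_ne i j with h | h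
  · subst h
    rcases le_total (x i) (y i) with h' | h'
    · rw [max_eq_right h', min_eq_left h']; apply le_of_eq; ring
    · rw [max_eq_left h', min_eq_right h']
  · have hQ : Qmat A α i j ≤ 0 := by
      unfold Qmat
      rw [if_neg h]
      have hc : 0 ≤ (1 - α) / 2 * A i j / (Real.sqrt (deg A i) * Real.sqrt (deg A j)) :=
        div_nonneg (mul_nonneg (by linarith) (A_nn hG i j))
          (mul_nonneg (Real.sqrt_nonneg _) (Real.sqrt_nonneg _))
      linarith
    have hprod : x i * x j + y i * y j
        ≤ max (x i) (y i) * max (x j) (y j) + min (x i) (y i) * min (x j) (y j) := by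
      rcases le_total (x i) (y i) with h1 | h1 <;> rcases le_total (x j) (y j) with h2 | h2
      · rw [max_eq_right h1, max_eq_right h2, min_eq_left h1, min_eq_left h2]; linarith
      · rw [max_eq_right h1, max_eq_left h2, min_eq_left h1, min_eq_right h2]; nlinarith
      · rw [max_eq_left h1, max_eq_right h2, min_eq_right h1, min_eq_left h2]; nlinarith
      · rw [max_eq_left h1, max_eq_left h2, min_eq_right h1, min_eq_right h2]
    calc max (x i) (y i) * Qmat A α i j * max (x j) (y j)
          + min (x i) (y i) * Qmat A α i j * min (x j) (y j)
        = Qmat A α i j * (max (x i) (y i) * max (x j) (y j)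
            + min (x i) (y i) * min (x j) (y j)) := by ring
      _ ≤ Qmat A α i j * (x i * x j + y i * y j) := mul_le_mul_of_nonpos_left hprod hQ
      _ = x i * Qmat A α i j * x j + y i * Qmat A α i j * y j := by ring
/-- Monotonicity of the ℓ1-regularized PageRank regularization path:
if `ρ' > ρ ≥ 0` then `x⋆(ρ') ≤ x⋆(ρ)` coordinatewise. -/
theorem pagerank_path_monotone
    {n : ℕ} (A : Matrix (Fin n) (Fin n) ℝ) (hG : IsGraph A)
    (α : ℝ) (hα : 0 < α) (hα1 : α ≤ 1) (v : Fin n)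
    (ρ ρ' : ℝ) (hρ : 0 ≤ ρ) (hρρ' : ρ < ρ')
    (xs xs' : Fin n → ℝ)
    -- xs = x⋆(ρ), xs' = x⋆(ρ') are the (unique) minimizers
    (hxs : ∀ z, Freg A α v ρ xs ≤ Freg A α v ρ z)
    (hxs' : ∀ z, Freg A α v ρ' xs' ≤ Freg A α v ρ' z)
    -- context fact: both minimizers are coordinatewise nonnegative
    (hnn : ∀ i, 0 ≤ xs i) (hnn' : ∀ i, 0 ≤ xs' i) :
    ∀ i : Fin n, xs' i ≤ xs i := by
  intro i0
  have hFreg : ∀ (ρ₀ : ℝ) (z : Fin n → ℝ), Freg A α v ρ₀ z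
      = (1 / 2) * qsum (Qmat A α) z - α * (z v / Real.sqrt (deg A v)) + α * ρ₀ * l1w A z := by
    intro ρ₀ z; unfold Freg; rw [fPR_eq]
  have hl1 : ρ * l1w A (vmax xs xs') + ρ' * l1w A (vmin xs xs')
      ≤ ρ * l1w A xs + ρ' * l1w A xs' := by
    unfold l1w vmax vmin
    rw [Finset.mul_sum, Finset.mul_sum, Finset.mul_sum, Finset.mul_sum,
      ← Finset.sum_add_distrib, ← Finset.sum_add_distrib]
    refine Finset.sum_le_sum fun i _ => ?_
    have hsi : (0:ℝ) ≤ Real.sqrt (deg A i) := Real.sqrt_nonneg _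
    rw [abs_of_nonneg (hnn i), abs_of_nonneg (hnn' i),
      abs_of_nonneg (le_trans (hnn i) (le_max_left _ _)),
      abs_of_nonneg (le_min (hnn i) (hnn' i))]
    rcases le_total (xs i) (xs' i) with h | h
    · rw [max_eq_right h, min_eq_left h]
      nlinarith [mul_nonneg hsi (sub_nonneg.mpr h)]
    · rw [max_eq_left h, min_eq_right h]
  have hsubq := qsum_submod hG hα1 xs xs'
  have hMm : vmax xs xs' v + vmin xs xs' v = xs v + xs' v := max_add_min _ _
  have hlin2 : α * (vmax xs xs' v / Real.sqrt (deg A v))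
        + α * (vmin xs xs' v / Real.sqrt (deg A v))
      = α * (xs v / Real.sqrt (deg A v)) + α * (xs' v / Real.sqrt (deg A v)) := by
    rw [← mul_add, ← mul_add, ← add_div, ← add_div, hMm]
  have hql1 : α * (ρ * l1w A (vmax xs xs') + ρ' * l1w A (vmin xs xs'))
      ≤ α * (ρ * l1w A xs + ρ' * l1w A xs') := mul_le_mul_of_nonneg_left hl1 hα.le
  have key1 : Freg A α v ρ (vmax xs xs') + Freg A α v ρ' (vmin xs xs')
      ≤ Freg A α v ρ xs + Freg A α v ρ' xs' := by
    rw [hFreg, hFreg, hFreg, hFreg]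
    nlinarith [hsubq, hql1, hlin2]
  have h1 : Freg A α v ρ xs ≤ Freg A α v ρ (vmax xs xs') := hxs _
  have h2 : Freg A α v ρ' xs' ≤ Freg A α v ρ' (vmin xs xs') := hxs' _
  have heq : Freg A α v ρ (vmax xs xs') = Freg A α v ρ xs := by linarith
  have hl1c : l1w A (vmid xs (vmax xs xs')) = (l1w A xs + l1w A (vmax xs xs')) / 2 := by
    unfold l1w vmid vmax
    rw [← Finset.sum_add_distrib, Finset.sum_div]
    refine Finset.sum_congr rfl fun i _ => ?_
    have h0 : (0:ℝ) ≤ max (xs i) (xs' i) := le_trans (hnn i) (le_max_left _ _)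
    rw [abs_of_nonneg (hnn i), abs_of_nonneg h0,
      abs_of_nonneg (div_nonneg (add_nonneg (hnn i) h0) (by norm_num))]
    ring
  have hqm := qsum_mid (Qmat A α) xs (vmax xs xs')
  have hmidv : vmid xs (vmax xs xs') v = (xs v + vmax xs xs' v) / 2 := rfl
  have hFc : Freg A α v ρ (vmid xs (vmax xs xs'))
      = Freg A α v ρ xs / 2 + Freg A α v ρ (vmax xs xs') / 2
        - qsum (Qmat A α) (vsub xs (vmax xs xs')) / 8 := by
    rw [hFreg, hFreg, hFreg, hqm, hl1c, hmidv]
    ring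
  have h3 : Freg A α v ρ xs ≤ Freg A α v ρ (vmid xs (vmax xs xs')) := hxs _
  have hqd : qsum (Qmat A α) (vsub xs (vmax xs xs')) ≤ 0 := by
    rw [hFc, heq] at h3; linarith
  have hql := quad_lb hG hα hα1 (vsub xs (vmax xs xs'))
  have hsum0 : ∑ i, vsub xs (vmax xs xs') i ^ 2 ≤ 0 := by
    have hmul : α * (∑ i, vsub xs (vmax xs xs') i ^ 2) ≤ α * 0 := by
      rw [mul_zero]; linarith
    exact le_of_mul_le_mul_left hmul hα
  have hterm : vsub xs (vmax xs xs') i0 ^ 2 ≤ 0 :=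
    le_trans (Finset.single_le_sum (f := fun i => vsub xs (vmax xs xs') i ^ 2)
      (fun i _ => sq_nonneg _) (Finset.mem_univ i0)) hsum0
  have hzero : xs i0 - max (xs i0) (xs' i0) = 0 := by
    have h4 : vsub xs (vmax xs xs') i0 = 0 := by
      nlinarith [sq_nonneg (vsub xs (vmax xs xs') i0)]
    exact h4
  calc xs' i0 ≤ max (xs i0) (xs' i0) := le_max_right _ _
    _ = xs i0 := (sub_eq_zero.mp hzero).symm
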